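/- For every a ∈ [0,1] there exists a function h : ℝ² → {a, a-1} such that the orbit {T_h^n(0,0) : n ≥ 1} is a bounded subset of ℝ², where T_h(x,y) = (x+y, y + h(x,y)). -/

import Mathlib

noncomputable def myh (b : ℝ) (p : ℝ × ℝ) : ℝ :=
  b - (if b * p.1 + (1 + b) * p.2 + b < 1 then (0:ℝ) else 1)

noncomputable def myT (b : ℝ) : ℝ × ℝ → ℝ × ℝ :=
  fun p : ℝ × ℝ => (p.1 + p.2, p.2 + myh b p)

def Pinv (b : ℝ) (p : ℝ × ℝ) : Prop :=
  (2 * b - 1) / b ^ 2 ≤ p.1 ∧ p.1 ≤ 1 / b ∧ 0 ≤ b * p.1 + p.2 ∧ b * p.1 + p.2 < 1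

lemma Pinv_step {b : ℝ} (hb0 : 0 < b) (hb2 : b ≤ 1 / 2) {p : ℝ × ℝ}
    (hp : Pinv b p) : Pinv b (myT b p) := by
  obtain ⟨h1, h2, h3, h4⟩ := hp
  have hb2' : (0:ℝ) < b ^ 2 := by positivity
  rw [div_le_iff₀ hb2'] at h1
  rw [le_div_iff₀ hb0] at h2
  set x := p.1
  set y := p.2
  have key1 : (2 * b - 1) / b ^ 2 ≤ x + y := by
    rw [div_le_iff₀ hb2']
    nlinarith [mul_nonneg (by linarith : (0:ℝ) ≤ 1 - b) (by linarith : (0:ℝ) ≤ b^2*x - (2*b-1)),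
      mul_nonneg hb2'.le h3, mul_nonneg hb0.le (by linarith : (0:ℝ) ≤ 1 - 2*b)]
  have key2 : x + y ≤ 1 / b := by
    rw [le_div_iff₀ hb0]
    nlinarith [mul_nonneg (by linarith : (0:ℝ) ≤ 1 - b) (by linarith : (0:ℝ) ≤ 1 - b*x),
      mul_nonneg hb0.le (by linarith : (0:ℝ) ≤ 1 - (b*x + y))]
  unfold myT myh Pinv
  by_cases ht : b * x + (1 + b) * y + b < 1
  · simp +zetaDelta only [if_pos ht]
    refine ⟨key1, key2, ?_, ?_⟩
    · have : 0 ≤ b * x + (1 + b) * y + b := by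
        nlinarith [mul_nonneg (by linarith : (0:ℝ) ≤ 1 + b) h3,
          mul_nonneg hb0.le (by linarith : (0:ℝ) ≤ 1 - b*x)]
      nlinarith [this]
    · nlinarith [ht]
  · simp +zetaDelta only [if_neg ht]
    push_neg at ht
    refine ⟨key1, key2, ?_, ?_⟩
    · nlinarith [ht]
    · have : b * x + (1 + b) * y + b < 2 := by
        nlinarith [mul_nonneg (by linarith : (0:ℝ) ≤ 1 + b) (by linarith : (0:ℝ) ≤ 1 - (b*x+y)),
          (by linarith : (0:ℝ) ≤ b^2*x - (2*b-1))]
      nlinarith [this]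

lemma Pinv_norm {b : ℝ} (hb0 : 0 < b) (hb2 : b ≤ 1 / 2) {p : ℝ × ℝ}
    (hp : Pinv b p) : ‖p‖ ≤ 2 / b + 1 / b ^ 2 := by
  obtain ⟨h1, h2, h3, h4⟩ := hp
  have hb2' : (0:ℝ) < b ^ 2 := by positivity
  rw [div_le_iff₀ hb2'] at h1
  rw [le_div_iff₀ hb0] at h2
  have hCeq : 2 / b + 1 / b ^ 2 = (2 * b + 1) / b ^ 2 := by
    field_simp
  rw [hCeq, Prod.norm_def]
  apply max_le
  · rw [Real.norm_eq_abs, abs_le]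
    constructor
    · rw [← neg_div, div_le_iff₀ hb2']
      nlinarith
    · rw [le_div_iff₀ hb2']
      nlinarith [mul_nonneg hb0.le (by linarith : (0:ℝ) ≤ 1 - b * p.1)]
  · rw [Real.norm_eq_abs, abs_le]
    constructor
    · rw [← neg_div, div_le_iff₀ hb2']
      nlinarith [mul_nonneg hb2'.le h3,
        mul_nonneg hb2'.le (by linarith : (0:ℝ) ≤ 1 - p.1 * b)]
    · rw [le_div_iff₀ hb2']
      nlinarith [mul_nonneg hb0.le (by linarith : (0:ℝ) ≤ b^2*p.1 - (2*b-1)),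
        mul_nonneg hb2'.le (by linarith : (0:ℝ) ≤ 1 - (b*p.1 + p.2))]

lemma Pinv_zero {b : ℝ} (hb0 : 0 < b) (hb2 : b ≤ 1 / 2) : Pinv b ((0:ℝ), (0:ℝ)) := by
  have hb2' : (0:ℝ) < b ^ 2 := by positivity
  refine ⟨?_, ?_, ?_, ?_⟩
  · show (2 * b - 1) / b ^ 2 ≤ (0:ℝ)
    rw [div_le_iff₀ hb2']
    nlinarith
  · show (0:ℝ) ≤ 1 / b
    positivity
  · show (0:ℝ) ≤ b * 0 + 0
    norm_num
  · show b * 0 + 0 < (1:ℝ)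
    norm_num

lemma orbit_inv {b : ℝ} (hb0 : 0 < b) (hb2 : b ≤ 1 / 2) (n : ℕ) :
    Pinv b ((myT b)^[n] ((0:ℝ),(0:ℝ))) := by
  induction n with
  | zero => simpa using Pinv_zero hb0 hb2
  | succ n ih =>
    rw [Function.iterate_succ_apply']
    exact Pinv_step hb0 hb2 ih

theorem exists_h_with_bounded_orbit
    (a : ℝ) (ha : a ∈ Set.Icc (0:ℝ) 1) :
    ∃ h : ℝ × ℝ → ℝ,
      (∀ p, h p = a ∨ h p = a - 1) ∧
      ∃ C : ℝ, ∀ n : ℕ, 1 ≤ n →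
        ‖(fun p : ℝ × ℝ => (p.1 + p.2, p.2 + h p))^[n] (0, 0)‖ ≤ C := by
  obtain ⟨ha0, ha1⟩ := ha
  rcases eq_or_lt_of_le ha0 with h0 | h0
  · -- a = 0
    refine ⟨fun _ => a, fun p => Or.inl rfl, 0, fun n _ => ?_⟩
    have hfix : (fun p : ℝ × ℝ => (p.1 + p.2, p.2 + a)) ((0:ℝ),(0:ℝ)) = ((0:ℝ),(0:ℝ)) := by
      simp [← h0]
    rw [Function.iterate_fixed hfix]
    simp
  rcases eq_or_lt_of_le ha1 with h1 | h1
  · -- a = 1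
    refine ⟨fun _ => a - 1, fun p => Or.inr rfl, 0, fun n _ => ?_⟩
    have hfix : (fun p : ℝ × ℝ => (p.1 + p.2, p.2 + (a - 1))) ((0:ℝ),(0:ℝ)) = ((0:ℝ),(0:ℝ)) := by
      simp [h1]
    rw [Function.iterate_fixed hfix]
    simp
  rcases le_or_gt a (1/2) with h2 | h2
  · -- 0 < a ≤ 1/2
    refine ⟨myh a, ?_, 2 / a + 1 / a ^ 2, fun n _ => ?_⟩
    · intro p
      unfold myh
      split
      · left; ring
      · right; ring
    · exact Pinv_norm h0 h2 (orbit_inv h0 h2 n)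
  · -- 1/2 < a < 1
    set b := 1 - a with hbdef
    have hb0 : 0 < b := by simp [hbdef]; linarith
    have hb2 : b ≤ 1 / 2 := by simp [hbdef]; linarith
    refine ⟨fun p => -myh b (-p), ?_, 2 / b + 1 / b ^ 2, fun n _ => ?_⟩
    · intro p
      unfold myh
      dsimp only
      split
      · right; rw [hbdef]; ring
      · left; rw [hbdef]; ring
    · have hconj : ∀ q : ℝ × ℝ,
        (fun p : ℝ × ℝ => (p.1 + p.2, p.2 + -myh b (-p))) (-q) = -(myT b q) := by
        intro q
        simp only [myT, Prod.fst_neg, Prod.snd_neg, neg_neg, Prod.neg_mk, Prod.mk.injEq]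
        exact ⟨by ring, by ring⟩
      have horb : ∀ m : ℕ,
          (fun p : ℝ × ℝ => (p.1 + p.2, p.2 + -myh b (-p)))^[m] ((0:ℝ),(0:ℝ))
            = -((myT b)^[m] ((0:ℝ),(0:ℝ))) := by
        intro m
        induction m with
        | zero => simp
        | succ m ih =>
          rw [Function.iterate_succ_apply', Function.iterate_succ_apply', ih]
          exact hconj _
      rw [horb n, norm_neg]
      exact Pinv_norm hb0 hb2 (orbit_inv hb0 hb2 n)
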